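/- Projection of an attractor of an asynchronous Boolean network onto an elementary block is either a single state (a fixed point of the block restricted to the attractor, when the attractor path never updates block nodes) or the full vertex set of a closed path in the block's transition system; in either case π_B(A) is contained in a strongly connected subset of the block's transition system. -/

import Mathlib

open Classical

/-- Asynchronous transition of a Boolean network `f`: exactly one node `i` is
updated to `f i x`, all other nodes keep their value. -/
def Step {V : Type*} (f : V → (V → Bool) → Bool) (x y : V → Bool) : Prop :=
  ∃ i, y i = f i x ∧ ∀ j, j ≠ i → y j = x j

/-- `g` depends only on the coordinates in `B`. -/
def DependsOnlyOn {V : Type*} (g : (V → Bool) → Bool) (B : Set V) : Prop :=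
  ∀ x y : V → Bool, (∀ v ∈ B, x v = y v) → g x = g y

/-- An elementary block: a set of nodes that is parent-closed, i.e. the update
function of every node of `B` depends only on nodes of `B`. -/
def Elementary {V : Type*} (f : V → (V → Bool) → Bool) (B : Set V) : Prop :=
  ∀ i ∈ B, DependsOnlyOn (f i) B

/-- Canonical representatives of block states: full states that are `false`
outside the block. -/
def ProjStates {V : Type*} (B : Set V) : Set (V → Bool) :=
  {x | ∀ v ∉ B, x v = false}

/-- Projection of a full state onto a block `B` (canonical representative). -/
noncomputable def proj {V : Type*} (B : Set V) (x : V → Bool) : V → Bool :=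
  fun v => if v ∈ B then x v else false

/-- Asynchronous transition of the block `B` (on canonical block states):
exactly one node `i ∈ B` is updated according to its Boolean function. -/
def BStep {V : Type*} (f : V → (V → Bool) → Bool) (B : Set V) (x y : V → Bool) : Prop :=
  x ∈ ProjStates B ∧ y ∈ ProjStates B ∧
    ∃ i ∈ B, y i = f i x ∧ ∀ j, j ≠ i → y j = x j

/-- An attractor of a transition relation `R`: a nonempty set of mutually
reachable states from which no outside state is reachable. -/
def IsAttractor {α : Type*} (R : α → α → Prop) (A : Set α) : Prop :=
  A.Nonempty ∧ (∀ x ∈ A, ∀ y ∈ A, Relation.ReflTransGen R x y) ∧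
    ∀ x ∈ A, ∀ y, Relation.ReflTransGen R x y → y ∈ A

/-- An attractor of the block `B` of the Boolean network `f`. -/
def IsBlockAttr {V : Type*} (f : V → (V → Bool) → Bool) (B : Set V)
    (A : Set (V → Bool)) : Prop :=
  A ⊆ ProjStates B ∧ IsAttractor (BStep f B) A


section PathLemmas
variable {α : Type*} {R : α → α → Prop}

lemma concat_path {m₁ m₂ : ℕ} {p q : ℕ → α} (h : p m₁ = q 0)
    (hp : ∀ l < m₁, R (p l) (p (l+1))) (hq : ∀ l < m₂, R (q l) (q (l+1))) :
    ∃ r : ℕ → α, (∀ l ≤ m₁, r l = p l) ∧ (∀ l ≤ m₂, r (m₁ + l) = q l) ∧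
      ∀ l < m₁ + m₂, R (r l) (r (l+1)) := by
  refine ⟨fun l => if l ≤ m₁ then p l else q (l - m₁), fun l hl => if_pos hl, ?_, ?_⟩
  · intro l hl
    dsimp only
    rcases Nat.eq_zero_or_pos l with rfl | hl0
    · simp [h]
    · rw [if_neg (by omega)]
      congr 1; omega
  · intro l hl
    dsimp only
    rcases lt_or_ge l m₁ with h1 | h1
    · rw [if_pos (by omega), if_pos (by omega)]
      exact hp l h1
    · rcases eq_or_lt_of_le h1 with rfl | h2
      · rw [if_pos le_rfl, if_neg (by omega)]
        have e : m₁ + 1 - m₁ = 1 := by omega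
        rw [e, h]
        exact hq 0 (by omega)
      · rw [if_neg (by omega), if_neg (by omega)]
        have e1 : l + 1 - m₁ = (l - m₁) + 1 := by omega
        rw [e1]
        exact hq (l - m₁) (by omega)

lemma path_of_rtg {u v : α} (h : Relation.ReflTransGen R u v) :
    ∃ m, ∃ p : ℕ → α, p 0 = u ∧ p m = v ∧ ∀ l < m, R (p l) (p (l+1)) := by
  induction h with
  | refl => exact ⟨0, fun _ => u, rfl, rfl, by omega⟩
  | @tail b c hb hbc ih =>
    obtain ⟨m, p, h0, hm, hs⟩ := ih
    refine ⟨m+1, fun l => if l ≤ m then p l else c, by simp [h0], by simp, ?_⟩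
    intro l hl
    dsimp only
    rcases lt_or_eq_of_le (Nat.lt_succ_iff.mp hl) with h1 | rfl
    · rw [if_pos (by omega), if_pos (by omega)]; exact hs l h1
    · rw [if_pos le_rfl, if_neg (by omega)]
      simpa [hm] using hbc

lemma path_mem {C : Set α} (hC : ∀ c ∈ C, ∀ z, R c z → z ∈ C) {m : ℕ} {p : ℕ → α}
    (h0 : p 0 ∈ C) (hs : ∀ l < m, R (p l) (p (l+1))) : ∀ l ≤ m, p l ∈ C := by
  intro l hl
  induction l with
  | zero => exact h0
  | succ n ih => exact hC _ (ih (by omega)) _ (hs n (by omega))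

lemma tour {C : Set α} (hconn : ∀ u ∈ C, ∀ v ∈ C, Relation.ReflTransGen R u v)
    {u : α} (hu : u ∈ C) :
    ∀ L : List α, (∀ a ∈ L, a ∈ C) →
      ∃ m, ∃ p : ℕ → α, p 0 = u ∧ p m = u ∧ (∀ l < m, R (p l) (p (l+1))) ∧
        ∀ a ∈ L, ∃ l ≤ m, p l = a := by
  intro L
  induction L with
  | nil => exact fun _ => ⟨0, fun _ => u, rfl, rfl, by omega, by simp⟩
  | cons a L ih =>
    intro hmem
    obtain ⟨m, p, h0, hm, hs, hall⟩ := ih (fun b hb => hmem b (List.mem_cons_of_mem a hb))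
    have ha : a ∈ C := hmem a List.mem_cons_self
    obtain ⟨m₁, q₁, q10, q1m, q1s⟩ := path_of_rtg (hconn u hu a ha)
    obtain ⟨m₂, q₂, q20, q2m, q2s⟩ := path_of_rtg (hconn a ha u hu)
    obtain ⟨r, hr1, hr2, hrs⟩ := concat_path (q1m.trans q20.symm) q1s q2s
    have hend : r (m₁ + m₂) = p 0 := by rw [hr2 m₂ le_rfl, q2m, h0]
    obtain ⟨w, hw1, hw2, hws⟩ := concat_path hend hrs hs
    refine ⟨m₁ + m₂ + m, w, ?_, ?_, hws, ?_⟩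
    · rw [hw1 0 (by omega), hr1 0 (by omega), q10]
    · rw [hw2 m le_rfl, hm]
    · intro b hb
      rcases List.mem_cons.mp hb with rfl | hb
      · exact ⟨m₁, by omega, by rw [hw1 m₁ (by omega), hr1 m₁ le_rfl, q1m]⟩
      · obtain ⟨l, hl, hpl⟩ := hall b hb
        exact ⟨m₁ + m₂ + l, by omega, by rw [hw2 l hl, hpl]⟩

end PathLemmas

/-- The projection of an attractor of the network onto an elementary block is
either a single state or the full vertex set of a closed path of the block's
transition system; in either case it is contained in a strongly connected
subset of the block's transition system. -/
theorem attractor_projection_structure {V : Type*} [Fintype V]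
    (f : V → (V → Bool) → Bool) (B : Set V) (hB : Elementary f B)
    (A : Set (V → Bool)) (hA : IsAttractor (Step f) A) :
    ((∃ s : V → Bool, proj B '' A = {s}) ∨
      (∃ k : ℕ, 1 ≤ k ∧ ∃ y : ℕ → (V → Bool), y 0 = y k ∧
        (∀ l, l < k → BStep f B (y l) (y (l + 1))) ∧
        proj B '' A = {s | ∃ l ≤ k, y l = s})) ∧
      ∃ C : Set (V → Bool), proj B '' A ⊆ C ∧
        ∀ u ∈ C, ∀ v ∈ C, Relation.ReflTransGen (BStep f B) u v := by
  obtain ⟨x₀, hx₀⟩ := hA.1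
  set C : Set (V → Bool) := proj B '' A with hCdef
  have hstep : ∀ x y, Step f x y → proj B y = proj B x ∨ BStep f B (proj B x) (proj B y) := by
    rintro x y ⟨i, hyi, hyj⟩
    by_cases hi : i ∈ B
    · right
      refine ⟨fun v hv => if_neg hv, fun v hv => if_neg hv, i, hi, ?_, ?_⟩
      · have he : f i (proj B x) = f i x := hB i hi (proj B x) x (fun v hv => if_pos hv)
        show (if i ∈ B then y i else false) = _
        rw [if_pos hi, hyi, he]
      · intro j hj
        by_cases hjB : j ∈ B
        · show (if j ∈ B then y j else false) = (if j ∈ B then x j else false)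
          rw [if_pos hjB, if_pos hjB]
          exact hyj j hj
        · show (if j ∈ B then y j else false) = (if j ∈ B then x j else false)
          rw [if_neg hjB, if_neg hjB]
    · left
      funext v
      by_cases hvB : v ∈ B
      · show (if v ∈ B then y v else false) = (if v ∈ B then x v else false)
        rw [if_pos hvB, if_pos hvB]
        exact hyj v (fun h => hi (h ▸ hvB))
      · show (if v ∈ B then y v else false) = (if v ∈ B then x v else false)
        rw [if_neg hvB, if_neg hvB]
  have hlift : ∀ x y, Relation.ReflTransGen (Step f) x y →
      Relation.ReflTransGen (BStep f B) (proj B x) (proj B y) := by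
    intro x y h
    induction h with
    | refl => exact .refl
    | tail _ hbc ih =>
      rcases hstep _ _ hbc with heq | hst
      · rwa [heq]
      · exact ih.tail hst
  have hconn : ∀ u ∈ C, ∀ v ∈ C, Relation.ReflTransGen (BStep f B) u v := by
    rintro _ ⟨x, hx, rfl⟩ _ ⟨y, hy, rfl⟩
    exact hlift x y (hA.2.1 x hx y hy)
  have hclosed : ∀ c ∈ C, ∀ z, BStep f B c z → z ∈ C := by
    rintro _ ⟨x, hx, rfl⟩ z ⟨_, hzP, i, hi, hzi, hzj⟩
    refine ⟨Function.update x i (f i x),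
      hA.2.2 x hx _ (Relation.ReflTransGen.single
        ⟨i, by simp, fun j hj => Function.update_of_ne hj _ _⟩), ?_⟩
    funext v
    by_cases hvB : v ∈ B
    · show (if v ∈ B then Function.update x i (f i x) v else false) = z v
      rw [if_pos hvB]
      by_cases hvi : v = i
      · subst hvi
        rw [Function.update_self, hzi]
        exact hB v hvB x (proj B x) (fun w hw => (if_pos hw).symm)
      · rw [Function.update_of_ne hvi, hzj v hvi]
        exact (if_pos hvB).symm
    · show (if v ∈ B then Function.update x i (f i x) v else false) = z v
      rw [if_neg hvB]
      exact (hzP v hvB).symm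
  refine ⟨?_, C, Set.Subset.rfl, hconn⟩
  by_cases hsing : ∃ s, C = {s}
  · exact Or.inl hsing
  · right
    have hu : proj B x₀ ∈ C := ⟨x₀, hx₀, rfl⟩
    have hex : ∃ v ∈ C, v ≠ proj B x₀ := by
      by_contra h
      push_neg at h
      exact hsing ⟨proj B x₀, Set.eq_singleton_iff_unique_mem.mpr ⟨hu, h⟩⟩
    obtain ⟨v, hv, hne⟩ := hex
    have hfin : C.Finite := Set.toFinite C
    obtain ⟨m, p, hp0, hpm, hps, hall⟩ := tour hconn hu hfin.toFinset.toList
      (fun a ha => hfin.mem_toFinset.mp (Finset.mem_toList.mp ha))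
    obtain ⟨m₁, q₁, q10, q1m, q1s⟩ := path_of_rtg (hconn _ hu v hv)
    obtain ⟨m₂, q₂, q20, q2m, q2s⟩ := path_of_rtg (hconn v hv _ hu)
    obtain ⟨r, hr1, hr2, hrs⟩ := concat_path (q1m.trans q20.symm) q1s q2s
    have hend : p m = r 0 := by rw [hpm, hr1 0 (by omega), q10]
    obtain ⟨w, hw1, hw2, hws⟩ := concat_path hend hps hrs
    have hm1 : 1 ≤ m₁ := by
      by_contra h
      have h0 : m₁ = 0 := by omega
      apply hne
      rw [← q1m, h0]
      exact q10
    refine ⟨m + (m₁ + m₂), by omega, w, ?_, hws, ?_⟩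
    · rw [hw1 0 (by omega), hp0, hw2 (m₁ + m₂) le_rfl, hr2 m₂ le_rfl, q2m]
    · have hw0 : w 0 ∈ C := by
        rw [hw1 0 (by omega), hp0]; exact hu
      ext s
      constructor
      · intro hs
        obtain ⟨l, hl, hpl⟩ := hall s (Finset.mem_toList.mpr (hfin.mem_toFinset.mpr hs))
        exact ⟨l, by omega, by rw [hw1 l hl, hpl]⟩
      · rintro ⟨l, hl, rfl⟩
        exact path_mem hclosed hw0 hws l hl
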